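/- arXiv:1204.2888 — 2 statements merged into one kernel-verified Lean document; each statement's English description precedes it below -/
import Mathlib

section
/- Let Δ be an obtuse basis of V and let θ be a linear isometry of V with θ(Δ) = Δ. Let V^θ := {x ∈ V : θ(x) = x}. For each orbit O of θ acting on Δ, set α̃_O := (1/|O|) ∑_{α ∈ O} α. Then the family (α̃_O)_O, indexed by the orbits of θ on Δ, is a basis of V^θ, this basis is obtuse, and its dual basis in V^θ is acute. -/
open scoped RealInnerProductSpace Classical

section Helpers

variable {V : Type*} [NormedAddCommGroup V] [InnerProductSpace ℝ V]

/-- Existence of a dual family (inside the span) for a finite linearly independent family. -/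
lemma exists_dual_family {ι : Type*} [Fintype ι] (v : ι → V)
    (hli : LinearIndependent ℝ v) :
    ∃ w : ι → V, (∀ i, w i ∈ Submodule.span ℝ (Set.range v)) ∧
      (∀ i j, ⟪w i, v j⟫ = if i = j then 1 else 0) := by
  set U := Submodule.span ℝ (Set.range v) with hU
  haveI : FiniteDimensional ℝ U := FiniteDimensional.span_of_finite ℝ (Set.finite_range v)
  let f : U →ₗ[ℝ] (ι → ℝ) :=
    { toFun := fun u => fun j => ⟪(u : V), v j⟫
      map_add' := by intro a b; funext j; simp [inner_add_left]
      map_smul' := by intro c a; funext j; simp [real_inner_smul_left] }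
  have hinj : Function.Injective f := by
    rw [← LinearMap.ker_eq_bot, LinearMap.ker_eq_bot']
    intro u hu
    have h0 : ∀ j, ⟪(u : V), v j⟫ = 0 := fun j => congrFun hu j
    have h1 : Submodule.span ℝ (Set.range v) ≤ (ℝ ∙ (u : V))ᗮ := by
      rw [Submodule.span_le]
      intro x hx
      obtain ⟨j, rfl⟩ := hx
      rw [SetLike.mem_coe, Submodule.mem_orthogonal_singleton_iff_inner_right]
      exact h0 j
    have h2 : (u : V) ∈ (ℝ ∙ (u : V))ᗮ := h1 u.2
    have h3 := Submodule.inner_right_of_mem_orthogonal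
      (Submodule.mem_span_singleton_self (u : V)) h2
    have h4 : (u : V) = 0 := inner_self_eq_zero.mp h3
    exact Subtype.ext h4
  have hrank : Module.finrank ℝ U = Module.finrank ℝ (ι → ℝ) := by
    have : Module.finrank ℝ ↥(Submodule.span ℝ (Set.range v)) = Fintype.card ι :=
      finrank_span_eq_card hli
    rw [Module.finrank_pi]
    exact this
  have hsurj : Function.Surjective f :=
    (LinearMap.injective_iff_surjective_of_finrank_eq_finrank hrank).mp hinj
  choose u hu using fun i => hsurj (Pi.single i 1)
  refine ⟨fun i => ↑(u i), fun i => (u i).2, ?_⟩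
  intro i j
  have h5 := congrFun (hu i) j
  simp only [f, LinearMap.coe_mk, AddHom.coe_mk, Pi.single_apply] at h5
  rw [h5, if_congr eq_comm rfl rfl]

/-- The dual family of an obtuse linearly independent family is acute. -/
lemma exists_dual_family_acute {ι : Type*} [Fintype ι] (v : ι → V)
    (hli : LinearIndependent ℝ v)
    (hobt : ∀ i j, i ≠ j → ⟪v i, v j⟫ ≤ 0) :
    ∃ w : ι → V, (∀ i, w i ∈ Submodule.span ℝ (Set.range v)) ∧
      (∀ i j, ⟪w i, v j⟫ = if i = j then 1 else 0) ∧
      (∀ i j, 0 ≤ ⟪w i, w j⟫) := by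
  obtain ⟨w, hmem, hdual⟩ := exists_dual_family v hli
  have hc : ∀ i, ∃ c : ι → ℝ, (∑ γ, c γ • v γ = w i) ∧ ∀ γ, 0 ≤ c γ := by
    intro i
    obtain ⟨c, hc⟩ := (Submodule.mem_span_range_iff_exists_fun ℝ).mp (hmem i)
    refine ⟨c, hc, ?_⟩
    by_contra hneg
    push_neg at hneg
    obtain ⟨γ₀, hγ₀⟩ := hneg
    set N : Finset ι := Finset.univ.filter (fun γ => c γ < 0) with hN
    set M : Finset ι := Finset.univ.filter (fun γ => ¬ c γ < 0) with hM
    set n : V := ∑ γ ∈ N, c γ • v γ with hn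
    set m : V := ∑ γ ∈ M, c γ • v γ with hm
    have hnm : n + m = w i := by
      rw [hn, hm, hN, hM, Finset.sum_filter_add_sum_filter_not, hc]
    have h1 : ⟪n, w i⟫ ≤ 0 := by
      rw [hn, sum_inner]
      apply Finset.sum_nonpos
      intro γ hγ
      have hγ' : c γ < 0 := (Finset.mem_filter.mp hγ).2
      rw [real_inner_smul_left, real_inner_comm, hdual]
      by_cases h : i = γ
      · rw [if_pos h]; linarith
      · rw [if_neg h]; linarith
    have h2 : 0 ≤ ⟪n, m⟫ := by
      rw [hn, sum_inner]
      apply Finset.sum_nonneg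
      intro γ hγ
      have hγ' : c γ < 0 := (Finset.mem_filter.mp hγ).2
      rw [real_inner_smul_left]
      have hsum : ⟪v γ, m⟫ ≤ 0 := by
        rw [hm, inner_sum]
        apply Finset.sum_nonpos
        intro δ hδ
        have hδ' : ¬ c δ < 0 := (Finset.mem_filter.mp hδ).2
        have hδ'' : 0 ≤ c δ := le_of_not_gt hδ'
        have hne : γ ≠ δ := fun h => hδ' (h ▸ hγ')
        have hvv : ⟪v γ, v δ⟫ ≤ 0 := hobt γ δ hne
        rw [real_inner_smul_right]
        exact mul_nonpos_iff.mpr (Or.inl ⟨hδ'', hvv⟩)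
      nlinarith
    have h3 : ⟪n, n⟫ ≤ 0 := by
      have : ⟪n, w i⟫ = ⟪n, n⟫ + ⟪n, m⟫ := by
        rw [← hnm, inner_add_right]
      linarith
    have h4 : n = 0 := inner_self_eq_zero.mp (le_antisymm h3 real_inner_self_nonneg)
    have h6 : ∀ γ ∈ N, c γ = 0 :=
      linearIndependent_iff'.mp hli N c (by rw [← hn]; exact h4)
    have hγ₀N : γ₀ ∈ N := by rw [hN]; simp [hγ₀]
    exact absurd (h6 γ₀ hγ₀N) (ne_of_lt hγ₀)
  choose c hcw hcpos using hc
  refine ⟨w, hmem, hdual, ?_⟩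
  intro i j
  rw [← hcw j, inner_sum]
  have : ∀ γ ∈ Finset.univ, ⟪w i, c j γ • v γ⟫ = if i = γ then c j γ else 0 := by
    intro γ _
    rw [real_inner_smul_right, hdual]
    by_cases h : i = γ
    · rw [if_pos h, if_pos h, mul_one]
    · rw [if_neg h, if_neg h, mul_zero]
  rw [Finset.sum_congr rfl this, Finset.sum_ite_eq, if_pos (Finset.mem_univ i)]
  exact hcpos j i

end Helpers

/-- The orbit of `α` under the isometry `θ` acting on the finite set `Δ`. -/
noncomputable def orbitOf {V : Type*} [NormedAddCommGroup V] [InnerProductSpace ℝ V]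
    (θ : V ≃ₗᵢ[ℝ] V) (Δ : Finset V) (α : V) : Finset V :=
  Δ.filter fun β => ∃ n : ℤ, (θ ^ n) α = β

/-- The average `α̃_O = (1/|O|) ∑_{β ∈ O} β` over the `θ`-orbit `O` of `α` in `Δ`. -/
noncomputable def orbitAvg {V : Type*} [NormedAddCommGroup V] [InnerProductSpace ℝ V]
    (θ : V ≃ₗᵢ[ℝ] V) (Δ : Finset V) (α : V) : V :=
  ((orbitOf θ Δ α).card : ℝ)⁻¹ • ∑ β ∈ orbitOf θ Δ α, β

/-- Let `Δ` be an obtuse basis of `V` and `θ` a linear isometry of `V`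
with `θ(Δ) = Δ`. Then the family of orbit averages `α̃_O`, indexed by the orbits of `θ` on
`Δ`, is a basis of the fixed space `V^θ`, this basis is obtuse, and its dual basis in `V^θ`
is acute. -/
theorem stmt_16
    {V : Type*} [NormedAddCommGroup V] [InnerProductSpace ℝ V] [FiniteDimensional ℝ V]
    [DecidableEq V]
    (Δ : Finset V)
    (hli : LinearIndependent ℝ ((↑) : ↥(Δ : Set V) → V))
    (hspan : Submodule.span ℝ (Δ : Set V) = ⊤)
    (hobtuse : ∀ α ∈ Δ, ∀ β ∈ Δ, α ≠ β → ⟪α, β⟫ ≤ 0)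
    (θ : V ≃ₗᵢ[ℝ] V) (hθΔ : Finset.image (⇑θ) Δ = Δ) :
    -- the map (orbit of α) ↦ α̃ is well-defined and injective on orbits
    (∀ α ∈ Δ, ∀ β ∈ Δ, orbitAvg θ Δ α = orbitAvg θ Δ β → ∃ n : ℤ, (θ ^ n) α = β) ∧
    -- the family of the α̃_O is a basis of V^θ = ker(θ − 1) : it is linearly independent
    LinearIndependent ℝ ((↑) : ↥((Δ.image (orbitAvg θ Δ) : Finset V) : Set V) → V) ∧
    -- and it spans V^θ
    Submodule.span ℝ ((Δ.image (orbitAvg θ Δ) : Finset V) : Set V) =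
      LinearMap.eqLocus θ.toLinearEquiv.toLinearMap LinearMap.id ∧
    -- the basis is obtuse (members coming from distinct orbits have inner product ≤ 0)
    (∀ α ∈ Δ, ∀ β ∈ Δ, (¬ ∃ n : ℤ, (θ ^ n) α = β) →
      ⟪orbitAvg θ Δ α, orbitAvg θ Δ β⟫ ≤ 0) ∧
    -- and its dual basis in V^θ is acute
    ∃ ϖ : V → V,
      (∀ α ∈ Δ, ϖ (orbitAvg θ Δ α) ∈
        LinearMap.eqLocus θ.toLinearEquiv.toLinearMap LinearMap.id) ∧
      (∀ α ∈ Δ, ∀ β ∈ Δ,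
        ⟪ϖ (orbitAvg θ Δ α), orbitAvg θ Δ β⟫ =
          if orbitAvg θ Δ β = orbitAvg θ Δ α then 1 else 0) ∧
      (∀ α ∈ Δ, ∀ β ∈ Δ, 0 ≤ ⟪ϖ (orbitAvg θ Δ α), ϖ (orbitAvg θ Δ β)⟫) := by
  classical
  -- basic facts about θ acting on Δ
  have hθmem : ∀ α ∈ Δ, θ α ∈ Δ := by
    intro α hα; rw [← hθΔ]; exact Finset.mem_image_of_mem _ hα
  have hθsymm : ∀ α ∈ Δ, θ.symm α ∈ Δ := by
    intro α hα
    rw [← hθΔ] at hα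
    obtain ⟨β, hβ, rfl⟩ := Finset.mem_image.mp hα
    simpa using hβ
  have hcomp : ∀ (m n : ℤ) (x : V), (θ ^ (m + n)) x = (θ ^ m) ((θ ^ n) x) := by
    intro m n x; rw [zpow_add]; rfl
  have hzpow : ∀ (n : ℤ), ∀ α ∈ Δ, (θ ^ n) α ∈ Δ := by
    intro n
    induction n using Int.induction_on with
    | zero => intro α hα; rw [zpow_zero]; exact hα
    | succ k ih =>
        intro α hα
        have e : (θ ^ ((k : ℤ) + 1)) α = (θ ^ (1 : ℤ)) ((θ ^ (k : ℤ)) α) := by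
          rw [add_comm, hcomp]
        rw [e, zpow_one]
        exact hθmem _ (ih α hα)
    | pred k ih =>
        intro α hα
        have e : (θ ^ (-(k : ℤ) - 1)) α = (θ ^ (-1 : ℤ)) ((θ ^ (-(k : ℤ))) α) := by
          rw [sub_eq_add_neg, add_comm, hcomp]
        rw [e, zpow_neg_one]
        exact hθsymm _ (ih α hα)
  -- the relation "same orbit"
  have hrel_refl : ∀ α : V, ∃ n : ℤ, (θ ^ n) α = α := fun α => ⟨0, by rw [zpow_zero]; rfl⟩
  have hrel_symm : ∀ {α β : V}, (∃ n : ℤ, (θ ^ n) α = β) → ∃ n : ℤ, (θ ^ n) β = α := by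
    rintro α β ⟨n, rfl⟩
    exact ⟨-n, by rw [← hcomp, neg_add_cancel, zpow_zero]; rfl⟩
  have hrel_trans : ∀ {α β γ : V}, (∃ n : ℤ, (θ ^ n) α = β) → (∃ n : ℤ, (θ ^ n) β = γ) →
      ∃ n : ℤ, (θ ^ n) α = γ := by
    rintro α β γ ⟨n, rfl⟩ ⟨m, rfl⟩
    exact ⟨m + n, hcomp m n α⟩
  -- orbit basics
  have horb_mem : ∀ {α γ : V}, γ ∈ orbitOf θ Δ α ↔ γ ∈ Δ ∧ ∃ n : ℤ, (θ ^ n) α = γ := by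
    intro α γ; exact Finset.mem_filter
  have horb_self : ∀ α ∈ Δ, α ∈ orbitOf θ Δ α := fun α hα =>
    horb_mem.mpr ⟨hα, hrel_refl α⟩
  have hcard : ∀ α ∈ Δ, ((orbitOf θ Δ α).card : ℝ) ≠ 0 := by
    intro α hα
    have : 0 < (orbitOf θ Δ α).card := Finset.card_pos.mpr ⟨α, horb_self α hα⟩
    exact Nat.cast_ne_zero.mpr this.ne'
  have horb_eq : ∀ {α β : V}, (∃ n : ℤ, (θ ^ n) α = β) → orbitOf θ Δ α = orbitOf θ Δ β := by
    intro α β h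
    ext γ
    rw [horb_mem, horb_mem]
    exact ⟨fun ⟨h1, h2⟩ => ⟨h1, hrel_trans (hrel_symm h) h2⟩,
      fun ⟨h1, h2⟩ => ⟨h1, hrel_trans h h2⟩⟩
  have havg_eq : ∀ {α β : V}, (∃ n : ℤ, (θ ^ n) α = β) → orbitAvg θ Δ α = orbitAvg θ Δ β := by
    intro α β h; unfold orbitAvg; rw [horb_eq h]
  have horb_disj : ∀ {α β : V}, ¬(∃ n : ℤ, (θ ^ n) α = β) →
      ∀ γ, γ ∈ orbitOf θ Δ α → γ ∈ orbitOf θ Δ β → False := by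
    intro α β h γ h1 h2
    exact h (hrel_trans (horb_mem.mp h1).2 (hrel_symm (horb_mem.mp h2).2))
  -- orthogonality helper
  have horth : ∀ z : V, (∀ δ ∈ Δ, ⟪z, δ⟫ = 0) → z = 0 := by
    intro z hz
    have h1 : Submodule.span ℝ (Δ : Set V) ≤ (ℝ ∙ z)ᗮ := by
      rw [Submodule.span_le]
      intro δ hδ
      rw [SetLike.mem_coe, Submodule.mem_orthogonal_singleton_iff_inner_right]
      exact hz δ hδ
    have h2 : z ∈ (ℝ ∙ z)ᗮ := h1 (by rw [hspan]; trivial)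
    exact inner_self_eq_zero.mp
      (Submodule.inner_right_of_mem_orthogonal (Submodule.mem_span_singleton_self z) h2)
  -- the dual family of Δ
  obtain ⟨wΔ, hwΔmem, hwΔdual⟩ := exists_dual_family ((↑) : ↥(Δ : Set V) → V) hli
  set W : V → V := fun γ => if h : γ ∈ Δ then wΔ ⟨γ, Finset.mem_coe.mpr h⟩ else 0 with hWdef
  have hW : ∀ γ ∈ Δ, ∀ δ ∈ Δ, ⟪W γ, δ⟫ = if γ = δ then 1 else 0 := by
    intro γ hγ δ hδ
    rw [hWdef]
    simp only [dif_pos hγ]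
    have := hwΔdual ⟨γ, Finset.mem_coe.mpr hγ⟩ ⟨δ, Finset.mem_coe.mpr hδ⟩
    rw [show ((⟨δ, Finset.mem_coe.mpr hδ⟩ : ↥(Δ : Set V)) : V) = δ from rfl] at this
    rw [this]
    by_cases h : γ = δ
    · rw [if_pos (Subtype.ext h), if_pos h]
    · rw [if_neg (fun hc => h (congrArg Subtype.val hc)), if_neg h]
  -- pairing with orbit averages
  have hWavg : ∀ γ ∈ Δ, ∀ β ∈ Δ, ⟪W γ, orbitAvg θ Δ β⟫ =
      if γ ∈ orbitOf θ Δ β then ((orbitOf θ Δ β).card : ℝ)⁻¹ else 0 := by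
    intro γ hγ β hβ
    unfold orbitAvg
    rw [real_inner_smul_right, inner_sum]
    rw [Finset.sum_congr rfl (fun δ hδ => hW γ hγ δ (horb_mem.mp hδ).1)]
    rw [Finset.sum_ite_eq]
    by_cases h : γ ∈ orbitOf θ Δ β
    · rw [if_pos h, if_pos h, mul_one]
    · rw [if_neg h, if_neg h, mul_zero]
  -- test functionals for orbits
  set Wsum : V → V := fun α => ∑ γ ∈ orbitOf θ Δ α, W γ with hWsumdef
  have hpair : ∀ α ∈ Δ, ∀ β ∈ Δ, ⟪Wsum α, orbitAvg θ Δ β⟫ =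
      if (∃ n : ℤ, (θ ^ n) α = β) then 1 else 0 := by
    intro α hα β hβ
    rw [hWsumdef]
    simp only [sum_inner]
    by_cases h : ∃ n : ℤ, (θ ^ n) α = β
    · rw [if_pos h]
      rw [Finset.sum_congr (horb_eq h)
        (fun γ hγ => by rw [hWavg γ (horb_mem.mp hγ).1 β hβ, if_pos hγ])]
      rw [Finset.sum_const, nsmul_eq_mul, mul_inv_cancel₀ (hcard β hβ)]
    · rw [if_neg h]
      apply Finset.sum_eq_zero
      intro γ hγ
      rw [hWavg γ (horb_mem.mp hγ).1 β hβ, if_neg (fun hc => horb_disj h γ hγ hc)]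
  -- Part 1 : injectivity on orbits
  have p1 : ∀ α ∈ Δ, ∀ β ∈ Δ, orbitAvg θ Δ α = orbitAvg θ Δ β →
      ∃ n : ℤ, (θ ^ n) α = β := by
    intro α hα β hβ h
    by_contra hn
    have h1 := hpair α hα α hα
    rw [if_pos (hrel_refl α), h] at h1
    have h2 := hpair α hα β hβ
    rw [if_neg hn] at h2
    rw [h1] at h2
    exact one_ne_zero h2
  -- refined pairing
  have hpair' : ∀ α ∈ Δ, ∀ y : V, y ∈ Δ.image (orbitAvg θ Δ) →
      ⟪Wsum α, y⟫ = if y = orbitAvg θ Δ α then 1 else 0 := by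
    intro α hα y hy
    obtain ⟨β, hβ, rfl⟩ := Finset.mem_image.mp hy
    rw [hpair α hα β hβ]
    refine if_congr ⟨fun h => (havg_eq h).symm, fun h => hrel_symm (p1 β hβ α hα h)⟩ rfl rfl
  -- Part 2 : linear independence
  have p2 : LinearIndependent ℝ
      ((↑) : ↥((Δ.image (orbitAvg θ Δ) : Finset V) : Set V) → V) := by
    rw [linearIndependent_iff']
    intro S g hsum x hxS
    have hxA : (x : V) ∈ Δ.image (orbitAvg θ Δ) := Finset.mem_coe.mp x.2
    obtain ⟨α, hα, hαx⟩ := Finset.mem_image.mp hxA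
    have h0 : ⟪Wsum α, ∑ y ∈ S, g y • (y : V)⟫ = 0 := by rw [hsum, inner_zero_right]
    rw [inner_sum] at h0
    have hterm : ∀ y ∈ S, ⟪Wsum α, g y • (y : V)⟫ = if y = x then g y else 0 := by
      intro y hy
      rw [real_inner_smul_right, hpair' α hα y (Finset.mem_coe.mp y.2), hαx]
      by_cases h : y = x
      · rw [if_pos (by rw [h]), if_pos h, mul_one]
      · rw [if_neg (fun hc => h (Subtype.ext hc)), if_neg h, mul_zero]
    rw [Finset.sum_congr rfl hterm, Finset.sum_ite_eq', if_pos hxS] at h0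
    exact h0
  -- image of an orbit under θ
  have himg : ∀ α ∈ Δ, Finset.image (⇑θ) (orbitOf θ Δ α) = orbitOf θ Δ α := by
    intro α hα
    apply Finset.eq_of_subset_of_card_le
    · intro x hx
      obtain ⟨γ, hγ, rfl⟩ := Finset.mem_image.mp hx
      obtain ⟨hγΔ, n, rfl⟩ := horb_mem.mp hγ
      refine horb_mem.mpr ⟨hθmem _ hγΔ, 1 + n, ?_⟩
      rw [hcomp, zpow_one]
    · rw [Finset.card_image_of_injective _ θ.injective]
  -- orbit averages are fixed by θ
  have hfix : ∀ α ∈ Δ, θ (orbitAvg θ Δ α) = orbitAvg θ Δ α := by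
    intro α hα
    unfold orbitAvg
    rw [map_smul, map_sum]
    congr 1
    have h : ∑ x ∈ (orbitOf θ Δ α).image (⇑θ), x = ∑ x ∈ orbitOf θ Δ α, θ x :=
      Finset.sum_image (fun x _ y _ h => θ.injective h)
    rw [himg α hα] at h
    exact h.symm
  -- eqLocus membership
  have hmemfix : ∀ x : V,
      (x ∈ LinearMap.eqLocus θ.toLinearEquiv.toLinearMap LinearMap.id) ↔ θ x = x := by
    intro x
    rw [LinearMap.mem_eqLocus]
    exact Iff.rfl
  -- θ acts compatibly on the dual family
  have hWθ : ∀ γ ∈ Δ, θ (W γ) = W (θ γ) := by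
    intro γ hγ
    have key : ∀ δ ∈ Δ, ⟪θ (W γ) - W (θ γ), δ⟫ = 0 := by
      intro δ hδ
      rw [inner_sub_left]
      have e1 : ⟪θ (W γ), δ⟫ = ⟪W γ, θ.symm δ⟫ := by
        conv_lhs => rw [← θ.apply_symm_apply δ]
        exact θ.inner_map_map _ _
      rw [e1, hW γ hγ (θ.symm δ) (hθsymm δ hδ), hW (θ γ) (hθmem γ hγ) δ hδ]
      have hiff : (γ = θ.symm δ) ↔ (θ γ = δ) := by
        constructor
        · intro h; rw [h]; exact θ.apply_symm_apply δ
        · intro h; rw [← h]; exact (θ.symm_apply_apply γ).symm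
      rw [if_congr hiff rfl rfl, sub_self]
    exact sub_eq_zero.mp (horth _ key)
  -- coordinates are constant along orbits for fixed vectors
  have hstep : ∀ δ ∈ Δ, ∀ x : V, θ x = x → ⟪W (θ δ), x⟫ = ⟪W δ, x⟫ := by
    intro δ hδ x hx
    rw [← hWθ δ hδ]
    conv_lhs => rw [← hx]
    exact θ.inner_map_map (W δ) x
  have hstep' : ∀ δ ∈ Δ, ∀ x : V, θ x = x → ⟪W (θ.symm δ), x⟫ = ⟪W δ, x⟫ := by
    intro δ hδ x hx
    have := hstep (θ.symm δ) (hθsymm δ hδ) x hx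
    rw [θ.apply_symm_apply] at this
    exact this.symm
  have hconst : ∀ x : V, θ x = x → ∀ (n : ℤ), ∀ γ ∈ Δ, ⟪W ((θ ^ n) γ), x⟫ = ⟪W γ, x⟫ := by
    intro x hx n
    induction n using Int.induction_on with
    | zero => intro γ hγ; rw [zpow_zero]; rfl
    | succ k ih =>
        intro γ hγ
        have e : (θ ^ ((k : ℤ) + 1)) γ = θ ((θ ^ (k : ℤ)) γ) := by
          rw [add_comm, hcomp, zpow_one]
        rw [e, hstep _ (hzpow k γ hγ) x hx]
        exact ih γ hγ
    | pred k ih =>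
        intro γ hγ
        have e : (θ ^ (-(k : ℤ) - 1)) γ = θ.symm ((θ ^ (-(k : ℤ))) γ) := by
          rw [sub_eq_add_neg, add_comm, hcomp, zpow_neg_one]; rfl
        rw [e, hstep' _ (hzpow (-(k : ℤ)) γ hγ) x hx]
        exact ih γ hγ
  -- representation of any vector in terms of Δ with W-coordinates
  have hrepr : ∀ x : V, ∑ γ ∈ Δ, ⟪W γ, x⟫ • γ = x := by
    intro x
    have hx : x ∈ Submodule.span ℝ (Δ : Set V) := by rw [hspan]; trivial
    obtain ⟨f, -, hf⟩ := Submodule.mem_span_finset.mp hx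
    have hcoord : ∀ γ ∈ Δ, ⟪W γ, x⟫ = f γ := by
      intro γ hγ
      rw [← hf, inner_sum]
      rw [Finset.sum_congr rfl (fun δ hδ => by
        rw [real_inner_smul_right, hW γ hγ δ hδ])]
      have : ∀ δ ∈ Δ, f δ * (if γ = δ then 1 else 0) = if γ = δ then f δ else 0 := by
        intro δ _
        by_cases h : γ = δ
        · rw [if_pos h, if_pos h, mul_one]
        · rw [if_neg h, if_neg h, mul_zero]
      rw [Finset.sum_congr rfl this, Finset.sum_ite_eq, if_pos hγ]
    rw [Finset.sum_congr rfl (fun γ hγ => by rw [hcoord γ hγ]), hf]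
  -- Part 3 : span equals the fixed space
  have p3 : Submodule.span ℝ ((Δ.image (orbitAvg θ Δ) : Finset V) : Set V) =
      LinearMap.eqLocus θ.toLinearEquiv.toLinearMap LinearMap.id := by
    apply le_antisymm
    · rw [Submodule.span_le]
      intro x hx
      obtain ⟨α, hα, rfl⟩ := Finset.mem_image.mp (Finset.mem_coe.mp hx)
      rw [SetLike.mem_coe, hmemfix]
      exact hfix α hα
    · intro x hx
      have hθx : θ x = x := (hmemfix x).mp hx
      rw [← hrepr x]
      rw [← Finset.sum_fiberwise_of_maps_to
        (fun γ hγ => Finset.mem_image_of_mem (orbitAvg θ Δ) hγ)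
        (fun γ => ⟪W γ, x⟫ • γ)]
      apply Submodule.sum_mem
      intro v hv
      obtain ⟨α, hα, rfl⟩ := Finset.mem_image.mp hv
      have hfib : Δ.filter (fun γ => orbitAvg θ Δ γ = orbitAvg θ Δ α) = orbitOf θ Δ α := by
        ext γ
        rw [Finset.mem_filter, horb_mem]
        constructor
        · rintro ⟨hγ, heq⟩
          exact ⟨hγ, hrel_symm (p1 γ hγ α hα heq)⟩
        · rintro ⟨hγ, hr⟩
          exact ⟨hγ, (havg_eq hr).symm⟩
      rw [hfib]
      have hcw : ∀ γ ∈ orbitOf θ Δ α, ⟪W γ, x⟫ • γ = ⟪W α, x⟫ • γ := by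
        intro γ hγ
        obtain ⟨hγΔ, n, rfl⟩ := horb_mem.mp hγ
        rw [hconst x hθx n α hα]
      rw [Finset.sum_congr rfl hcw, ← Finset.smul_sum]
      have hsum : ∑ γ ∈ orbitOf θ Δ α, γ =
          ((orbitOf θ Δ α).card : ℝ) • orbitAvg θ Δ α := by
        unfold orbitAvg
        rw [smul_smul, mul_inv_cancel₀ (hcard α hα), one_smul]
      rw [hsum, smul_smul]
      exact Submodule.smul_mem _ _ (Submodule.subset_span
        (Finset.mem_coe.mpr (Finset.mem_image_of_mem _ hα)))
  -- Part 4 : obtuseness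
  have p4 : ∀ α ∈ Δ, ∀ β ∈ Δ, (¬ ∃ n : ℤ, (θ ^ n) α = β) →
      ⟪orbitAvg θ Δ α, orbitAvg θ Δ β⟫ ≤ 0 := by
    intro α hα β hβ hn
    unfold orbitAvg
    rw [real_inner_smul_left, real_inner_smul_right]
    have hS : ⟪∑ γ ∈ orbitOf θ Δ α, γ, ∑ δ ∈ orbitOf θ Δ β, δ⟫ ≤ 0 := by
      rw [sum_inner]
      apply Finset.sum_nonpos
      intro γ hγ
      rw [inner_sum]
      apply Finset.sum_nonpos
      intro δ hδ
      have hne : γ ≠ δ := fun h => horb_disj hn γ hγ (h ▸ hδ)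
      exact hobtuse γ (horb_mem.mp hγ).1 δ (horb_mem.mp hδ).1 hne
    have h1 : (0:ℝ) ≤ ((orbitOf θ Δ α).card : ℝ)⁻¹ := inv_nonneg.mpr (Nat.cast_nonneg _)
    have h2 : (0:ℝ) ≤ ((orbitOf θ Δ β).card : ℝ)⁻¹ := inv_nonneg.mpr (Nat.cast_nonneg _)
    exact mul_nonpos_iff.mpr (Or.inl ⟨h1, mul_nonpos_iff.mpr (Or.inl ⟨h2, hS⟩)⟩)
  -- Part 5 : acute dual basis
  refine ⟨p1, p2, p3, p4, ?_⟩
  have hobtA : ∀ (i j : ↥((Δ.image (orbitAvg θ Δ) : Finset V) : Set V)), i ≠ j →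
      ⟪(i : V), (j : V)⟫ ≤ 0 := by
    intro i j hne
    obtain ⟨α, hα, hαi⟩ := Finset.mem_image.mp (Finset.mem_coe.mp i.2)
    obtain ⟨β, hβ, hβj⟩ := Finset.mem_image.mp (Finset.mem_coe.mp j.2)
    have hnr : ¬ ∃ n : ℤ, (θ ^ n) α = β := by
      intro h
      exact hne (Subtype.ext (by rw [← hαi, ← hβj, havg_eq h]))
    rw [← hαi, ← hβj]
    exact p4 α hα β hβ hnr
  obtain ⟨w, hwmem, hwdual, hwacute⟩ := exists_dual_family_acute _ p2 hobtA
  have hrange : Set.range ((↑) : ↥((Δ.image (orbitAvg θ Δ) : Finset V) : Set V) → V) =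
      ((Δ.image (orbitAvg θ Δ) : Finset V) : Set V) := Subtype.range_coe
  set ϖ : V → V := fun y => if h : y ∈ Δ.image (orbitAvg θ Δ) then
    w ⟨y, Finset.mem_coe.mpr h⟩ else 0 with hϖdef
  have hϖ : ∀ (α : V) (hα : α ∈ Δ), ϖ (orbitAvg θ Δ α) =
      w ⟨orbitAvg θ Δ α, Finset.mem_coe.mpr (Finset.mem_image_of_mem _ hα)⟩ := by
    intro α hα
    rw [hϖdef]
    simp only [dif_pos (Finset.mem_image_of_mem (orbitAvg θ Δ) hα)]
  refine ⟨ϖ, ?_, ?_, ?_⟩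
  · intro α hα
    rw [hϖ α hα, ← p3]
    have := hwmem ⟨orbitAvg θ Δ α, Finset.mem_coe.mpr (Finset.mem_image_of_mem _ hα)⟩
    rwa [hrange] at this
  · intro α hα β hβ
    rw [hϖ α hα]
    have := hwdual ⟨orbitAvg θ Δ α, Finset.mem_coe.mpr (Finset.mem_image_of_mem _ hα)⟩
      ⟨orbitAvg θ Δ β, Finset.mem_coe.mpr (Finset.mem_image_of_mem _ hβ)⟩
    rw [show ((⟨orbitAvg θ Δ β, Finset.mem_coe.mpr (Finset.mem_image_of_mem _ hβ)⟩ :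
      ↥((Δ.image (orbitAvg θ Δ) : Finset V) : Set V)) : V) = orbitAvg θ Δ β from rfl] at this
    rw [this]
    by_cases h : orbitAvg θ Δ β = orbitAvg θ Δ α
    · rw [if_pos (Subtype.ext h.symm), if_pos h]
    · rw [if_neg (fun hc => h (congrArg Subtype.val hc).symm), if_neg h]
  · intro α hα β hβ
    rw [hϖ α hα, hϖ β hβ]
    exact hwacute _ _
end

section
/- Let A ⊆ B ⊆ Δ be subsets with θ(B) = B, let s₀ ∈ W_B, and set s := s₀ ∘ θ (a linear isometry of V). Let C̄ := {X ∈ V : ⟨α, X⟩ ≥ 0 for all α ∈ Δ} be the closed positive chamber and let 𝔞_A^B := {X ∈ span(B) : ⟨α, X⟩ = 0 for all α ∈ A}. Then at least one of the following holds: (1) there exists c > 0 such that ‖X − s(X)‖ ≥ c‖X‖ for every X ∈ C̄ ∩ 𝔞_A^B; (2) there exists a subset B₁ with A ⊆ B₁ ⊊ B, θ(B₁) = B₁ and s₀ ∈ W_{B₁}. -/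
open scoped RealInnerProductSpace Classical

/-- `β` is a `ℤ`-linear combination of elements of `Δ` with all coefficients `≥ 0`
(for `β` in a root system with base `Δ`, this means `β` is a positive root). -/
def PosComb {V : Type*} [NormedAddCommGroup V] [InnerProductSpace ℝ V]
    (Δ : Finset V) (β : V) : Prop :=
  ∃ c : V → ℤ, (∀ α, 0 ≤ c α) ∧ β = ∑ α ∈ Δ, (c α : ℝ) • α

section Aux
variable {V : Type*} [NormedAddCommGroup V] [InnerProductSpace ℝ V]
variable {Δ : Finset V}

/-- uniqueness of real coordinates w.r.t. a linearly independent finset -/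
lemma rs_coords_eq (hΔli : LinearIndependent ℝ ((↑) : ↥(Δ : Set V) → V))
    (c d : V → ℝ) (h : ∑ α ∈ Δ, c α • α = ∑ α ∈ Δ, d α • α) :
    ∀ α ∈ Δ, c α = d α := by
  intro α hα
  have h0 : ∑ x ∈ Δ.attach, (c x.1 - d x.1) • (x.1 : V) = 0 := by
    have e1 := Finset.sum_attach Δ (fun a => c a • a)
    have e2 := Finset.sum_attach Δ (fun a => d a • a)
    simp [sub_smul, Finset.sum_sub_distrib, e1, e2, h]
  have hli2 : LinearIndependent ℝ (fun x : {x // x ∈ Δ} => (x : V)) := by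
    have : ((↑) : ↥(Δ : Set V) → V) = fun x : ↥(Δ : Set V) => (x : V) := rfl
    exact hΔli.comp (fun x : {x // x ∈ Δ} => (⟨x.1, by simpa using x.2⟩ : ↥(Δ : Set V)))
      (fun a b hab => by cases a; cases b; simpa using hab)
  have := linearIndependent_iff'.mp hli2 Δ.attach (fun x => c x.1 - d x.1) h0
    ⟨α, hα⟩ (Finset.mem_attach _ _)
  simp only [] at this
  linarith [this]

lemma rs_posComb_inner_nonneg {β z : V} (h : PosComb Δ β)
    (hz : ∀ α ∈ Δ, 0 ≤ ⟪α, z⟫) : 0 ≤ ⟪β, z⟫ := by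
  obtain ⟨c, hc, rfl⟩ := h
  rw [sum_inner]
  refine Finset.sum_nonneg fun α hα => ?_
  rw [real_inner_smul_left]
  have : (0:ℝ) ≤ (c α : ℝ) := by exact_mod_cast hc α
  exact mul_nonneg this (hz α hα)

lemma rs_not_pos_both (hΔli : LinearIndependent ℝ ((↑) : ↥(Δ : Set V) → V))
    {β : V} (hβ : β ≠ 0) (h1 : PosComb Δ β) (h2 : PosComb Δ (-β)) : False := by
  obtain ⟨c, hc, hceq⟩ := h1
  obtain ⟨d, hd, hdeq⟩ := h2
  have h0 : ∑ α ∈ Δ, ((c α : ℝ) + (d α : ℝ)) • α = ∑ α ∈ Δ, (0:ℝ) • α := by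
    simp [add_smul, Finset.sum_add_distrib, ← hceq, ← hdeq]
  have hz := rs_coords_eq hΔli _ _ h0
  apply hβ
  rw [hceq]
  apply Finset.sum_eq_zero
  intro α hα
  have h1 : (c α : ℝ) + (d α : ℝ) = 0 := hz α hα
  have : (c α : ℝ) = 0 := by
    have hc' : (0:ℝ) ≤ (c α : ℝ) := by exact_mod_cast hc α
    have hd' : (0:ℝ) ≤ (d α : ℝ) := by exact_mod_cast hd α
    linarith
  rw [this, zero_smul]

lemma rs_pos_of_mem {α : V} (hα : α ∈ Δ) : PosComb Δ α := by
  refine ⟨fun γ => if γ = α then 1 else 0, fun γ => by positivity, ?_⟩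
  rw [Finset.sum_eq_single α]
  · simp
  · intro b hb hne; simp [hne]
  · intro h; exact absurd hα h

variable {R : Finset V} {sref : V → (V ≃ₗᵢ[ℝ] V)}

lemma rs_sref_self (hsref : ∀ α ∈ R, ∀ x : V, sref α x = x - (2 * ⟪x, α⟫ / ⟪α, α⟫) • α)
    (hR0 : (0:V) ∉ R) {α : V} (hα : α ∈ R) : sref α α = -α := by
  have hne : α ≠ 0 := fun h => hR0 (h ▸ hα)
  have hip : ⟪α, α⟫ ≠ 0 := fun h => hne (inner_self_eq_zero.mp h)
  rw [hsref α hα α]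
  rw [mul_div_assoc, div_self hip, mul_one]
  module

lemma rs_sref_fix (hsref : ∀ α ∈ R, ∀ x : V, sref α x = x - (2 * ⟪x, α⟫ / ⟪α, α⟫) • α)
    {α : V} (hα : α ∈ R) {y : V} (h : ⟪y, α⟫ = 0) : sref α y = y := by
  rw [hsref α hα y, h]
  simp

lemma rs_sref_sq (hsref : ∀ α ∈ R, ∀ x : V, sref α x = x - (2 * ⟪x, α⟫ / ⟪α, α⟫) • α)
    (hR0 : (0:V) ∉ R) {α : V} (hα : α ∈ R) : sref α * sref α = 1 := by
  have hne : α ≠ 0 := fun h => hR0 (h ▸ hα)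
  have hip : ⟪α, α⟫ ≠ 0 := fun h => hne (inner_self_eq_zero.mp h)
  ext x
  show sref α (sref α x) = x
  rw [hsref α hα x, hsref α hα _]
  rw [inner_sub_left, real_inner_smul_left]
  field_simp
  ring_nf
  module

lemma rs_sref_inv (hsref : ∀ α ∈ R, ∀ x : V, sref α x = x - (2 * ⟪x, α⟫ / ⟪α, α⟫) • α)
    (hR0 : (0:V) ∉ R) {α : V} (hα : α ∈ R) : (sref α)⁻¹ = sref α := by
  exact inv_eq_of_mul_eq_one_right (rs_sref_sq hsref hR0 hα)

lemma rs_conj (hsref : ∀ α ∈ R, ∀ x : V, sref α x = x - (2 * ⟪x, α⟫ / ⟪α, α⟫) • α)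
    {α : V} (hα : α ∈ R) (v : V ≃ₗᵢ[ℝ] V) (hvα : v α ∈ R) :
    sref (v α) = v * sref α * v⁻¹ := by
  ext x
  show sref (v α) x = v (sref α (v.symm x))
  rw [hsref _ hvα x, hsref α hα (v.symm x)]
  have h1 : ⟪v.symm x, α⟫ = ⟪x, v α⟫ := by
    rw [← v.inner_map_map (v.symm x) α, v.apply_symm_apply]
  have h2 : ⟪v α, v α⟫ = ⟪α, α⟫ := v.inner_map_map α α
  rw [map_sub, map_smul, v.apply_symm_apply, h1, h2]

lemma rs_L1 (hsref : ∀ α ∈ R, ∀ x : V, sref α x = x - (2 * ⟪x, α⟫ / ⟪α, α⟫) • α)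
    (hRred : ∀ α ∈ R, ∀ c : ℝ, c • α ∈ R → c = 1 ∨ c = -1)
    (hΔR : Δ ⊆ R) (hΔli : LinearIndependent ℝ ((↑) : ↥(Δ : Set V) → V))
    (hbase : ∀ β ∈ R, PosComb Δ β ∨ PosComb Δ (-β))
    {α β : V} (hα : α ∈ Δ) (hβ : β ∈ R) (hsβ : sref α β ∈ R)
    (hpos : PosComb Δ β) (hne : β ≠ α) :
    PosComb Δ (sref α β) := by
  obtain ⟨c, hc, hceq⟩ := hpos
  -- find γ₀ ≠ α with positive coefficient
  have hγ0 : ∃ γ₀ ∈ Δ, γ₀ ≠ α ∧ c γ₀ ≠ 0 := by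
    by_contra hcon
    push_neg at hcon
    have hβα : β = (c α : ℝ) • α := by
      rw [hceq, Finset.sum_eq_single α]
      · intro b hb hbne; rw [hcon b hb hbne]; simp
      · intro h; exact absurd hα h
    rcases hRred α (hΔR hα) (c α : ℝ) (by rw [← hβα]; exact hβ) with h1 | h1
    · exact hne (by rw [hβα, h1, one_smul])
    · have : (0:ℝ) ≤ (c α : ℝ) := by exact_mod_cast hc α
      linarith
  obtain ⟨γ₀, hγ₀Δ, hγ₀ne, hγ₀pos⟩ := hγ0
  rcases hbase _ hsβ with h | h
  · exact h
  exfalso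
  obtain ⟨d, hd, hdeq⟩ := h
  set k : ℝ := 2 * ⟪β, α⟫ / ⟪α, α⟫ with hk
  have hmain : ∑ γ ∈ Δ, ((if γ = α then k else 0) - (c γ : ℝ)) • γ
      = ∑ γ ∈ Δ, (d γ : ℝ) • γ := by
    rw [← hdeq, hsref α (hΔR hα) β]
    have h1 : ∑ γ ∈ Δ, ((if γ = α then k else 0) : ℝ) • γ = k • α := by
      rw [Finset.sum_eq_single α]
      · simp
      · intro b hb hbne; simp [hbne]
      · intro h; exact absurd hα h
    simp only [sub_smul, Finset.sum_sub_distrib, h1, ← hceq]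
    abel
  have := rs_coords_eq hΔli _ _ hmain γ₀ hγ₀Δ
  rw [if_neg hγ₀ne] at this
  have hd' : (0:ℝ) ≤ (d γ₀ : ℝ) := by exact_mod_cast hd γ₀
  have hc1 : (1:ℝ) ≤ (c γ₀ : ℝ) := by
    have : 1 ≤ c γ₀ := lt_of_le_of_ne (hc γ₀) (Ne.symm hγ₀pos)
    exact_mod_cast this
  linarith

def wprod {V : Type*} [NormedAddCommGroup V] [InnerProductSpace ℝ V]
    (sref : V → (V ≃ₗᵢ[ℝ] V)) (l : List V) : V ≃ₗᵢ[ℝ] V := (l.map sref).prod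

lemma wprod_nil : wprod sref ([] : List V) = 1 := rfl

lemma wprod_cons (a : V) (l : List V) : wprod sref (a :: l) = sref a * wprod sref l := by
  simp [wprod]

lemma wprod_append (l l' : List V) :
    wprod sref (l ++ l') = wprod sref l * wprod sref l' := by
  simp [wprod]

lemma rs_wprod_mem_closure {B : Finset V} {l : List V} (hl : ∀ a ∈ l, a ∈ B) :
    wprod sref l ∈ Subgroup.closure (sref '' (B : Set V)) := by
  induction l with
  | nil => exact Subgroup.one_mem _
  | cons a t ih =>
    rw [wprod_cons]
    exact Subgroup.mul_mem _
      (Subgroup.subset_closure ⟨a, by simpa using hl a (by simp), rfl⟩)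
      (ih fun b hb => hl b (by simp [hb]))

lemma rs_wprod_R (hRrefl : ∀ α ∈ R, ∀ β ∈ R, sref α β ∈ R)
    {l : List V} (hl : ∀ a ∈ l, a ∈ R) {β : V} (hβ : β ∈ R) :
    wprod sref l β ∈ R := by
  induction l with
  | nil => simpa [wprod_nil] using hβ
  | cons a t ih =>
    rw [wprod_cons]
    exact hRrefl a (hl a (by simp)) _ (ih fun b hb => hl b (by simp [hb]))

lemma wprod_singleton (a : V) : wprod sref [a] = sref a := by simp [wprod]

lemma rs_wprod_inv (hsref : ∀ α ∈ R, ∀ x : V, sref α x = x - (2 * ⟪x, α⟫ / ⟪α, α⟫) • α)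
    (hR0 : (0:V) ∉ R) {l : List V} (hl : ∀ a ∈ l, a ∈ R) :
    (wprod sref l)⁻¹ = wprod sref l.reverse := by
  induction l with
  | nil => simp [wprod_nil]
  | cons a t ih =>
    rw [wprod_cons, List.reverse_cons, wprod_append, mul_inv_rev,
      ih (fun b hb => hl b (by simp [hb])), rs_sref_inv hsref hR0 (hl a (by simp))]
    simp [wprod]

lemma rs_exists_word (hsref : ∀ α ∈ R, ∀ x : V, sref α x = x - (2 * ⟪x, α⟫ / ⟪α, α⟫) • α)
    (hR0 : (0:V) ∉ R) {B : Finset V} (hBR : B ⊆ R) {w : V ≃ₗᵢ[ℝ] V}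
    (hw : w ∈ Subgroup.closure (sref '' (B : Set V))) :
    ∃ l : List V, (∀ a ∈ l, a ∈ B) ∧ w = wprod sref l := by
  induction hw using Subgroup.closure_induction with
  | mem x hx =>
    obtain ⟨a, ha, rfl⟩ := hx
    exact ⟨[a], by simpa using ha, by simp [wprod_cons, wprod_nil]⟩
  | one => exact ⟨[], by simp, rfl⟩
  | mul x y _ _ ihx ihy =>
    obtain ⟨l1, hl1, rfl⟩ := ihx
    obtain ⟨l2, hl2, rfl⟩ := ihy
    refine ⟨l1 ++ l2, ?_, (wprod_append l1 l2).symm⟩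
    intro a ha
    rcases List.mem_append.mp ha with h | h
    exacts [hl1 a h, hl2 a h]
  | inv x _ ihx =>
    obtain ⟨l, hl, rfl⟩ := ihx
    exact ⟨l.reverse, fun a ha => hl a (List.mem_reverse.mp ha),
      rs_wprod_inv hsref hR0 (fun a ha => hBR (hl a ha))⟩

lemma rs_descent (hsref : ∀ α ∈ R, ∀ x : V, sref α x = x - (2 * ⟪x, α⟫ / ⟪α, α⟫) • α)
    (hR0 : (0:V) ∉ R) (hRrefl : ∀ α ∈ R, ∀ β ∈ R, sref α β ∈ R)
    (hRred : ∀ α ∈ R, ∀ c : ℝ, c • α ∈ R → c = 1 ∨ c = -1)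
    (hΔR : Δ ⊆ R) (hΔli : LinearIndependent ℝ ((↑) : ↥(Δ : Set V) → V))
    (hbase : ∀ β ∈ R, PosComb Δ β ∨ PosComb Δ (-β))
    {B : Finset V} (hBΔ : B ⊆ Δ) {α : V} (hα : α ∈ B) :
    ∀ l : List V, (∀ a ∈ l, a ∈ B) → ¬ PosComb Δ (wprod sref l α) →
    ∃ l' : List V, (∀ a ∈ l', a ∈ B) ∧ l'.length + 1 = l.length ∧
      wprod sref l' = wprod sref l * sref α := by
  have hαR : α ∈ R := hΔR (hBΔ hα)
  intro l
  induction l with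
  | nil =>
    intro _ h
    exact absurd (rs_pos_of_mem (hBΔ hα)) (by simpa [wprod_nil] using h)
  | cons β t ih =>
    intro hl hneg
    have hβB : β ∈ B := hl β (by simp)
    have htB : ∀ a ∈ t, a ∈ B := fun a ha => hl a (by simp [ha])
    set u := wprod sref t with hu
    have huα : u α ∈ R := rs_wprod_R hRrefl (fun a ha => hΔR (hBΔ (htB a ha))) hαR
    by_cases hpos : PosComb Δ (u α)
    · have hform : wprod sref (β :: t) α = sref β (u α) := by rw [wprod_cons]; rfl
      have huαβ : u α = β := by
        by_contra hne
        exact hneg (hform ▸ rs_L1 hsref hRred hΔR hΔli hbase (hBΔ hβB) huα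
          (hRrefl β (hΔR (hBΔ hβB)) _ huα) hpos hne)
      have hconj : sref β = u * sref α * u⁻¹ := by
        rw [← huαβ]
        exact rs_conj hsref hαR u (huαβ ▸ huα)
      have hsq := rs_sref_sq hsref hR0 hαR
      have hcomm : sref β * u = u * sref α := by rw [hconj]; group
      refine ⟨t, htB, by simp, ?_⟩
      rw [wprod_cons, ← hu, hcomm, mul_assoc, hsq, mul_one]
    · obtain ⟨t', ht', hlen, heq⟩ := ih htB hpos
      refine ⟨β :: t', fun a ha => ?_, by simp [← hlen], ?_⟩
      · rcases List.mem_cons.mp ha with h | h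
        exacts [h ▸ hβB, ht' a h]
      · rw [wprod_cons, wprod_cons, heq, mul_assoc]


lemma rs_triv (hsref : ∀ α ∈ R, ∀ x : V, sref α x = x - (2 * ⟪x, α⟫ / ⟪α, α⟫) • α)
    (hR0 : (0:V) ∉ R) (hRrefl : ∀ α ∈ R, ∀ β ∈ R, sref α β ∈ R)
    (hRred : ∀ α ∈ R, ∀ c : ℝ, c • α ∈ R → c = 1 ∨ c = -1)
    (hΔR : Δ ⊆ R) (hΔli : LinearIndependent ℝ ((↑) : ↥(Δ : Set V) → V))
    (hbase : ∀ β ∈ R, PosComb Δ β ∨ PosComb Δ (-β))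
    {B : Finset V} (hBΔ : B ⊆ Δ) :
    ∀ n : ℕ, ∀ l : List V, l.length ≤ n → (∀ a ∈ l, a ∈ B) →
    (∀ α ∈ B, PosComb Δ (wprod sref l α)) → wprod sref l = 1 := by
  intro n
  induction n with
  | zero =>
    intro l hlen _ _
    rw [List.length_eq_zero_iff.mp (Nat.le_zero.mp hlen)]
    rfl
  | succ n ih =>
    intro l hlen hlB hpos
    rcases List.eq_nil_or_concat l with rfl | ⟨t, β, rfl⟩
    · rfl
    · rw [List.concat_eq_append] at hlen hlB hpos ⊢
      have hβB : β ∈ B := hlB β (by simp)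
      have htB : ∀ a ∈ t, a ∈ B := fun a ha => hlB a (by simp [ha])
      set u := wprod sref t with hu
      have huβR : u β ∈ R := rs_wprod_R hRrefl (fun a ha => hΔR (hBΔ (htB a ha)))
        (hΔR (hBΔ hβB))
      have hw : wprod sref (t ++ [β]) = u * sref β := by
        rw [wprod_append, wprod_singleton, ← hu]
      have hwβ : wprod sref (t ++ [β]) β = -(u β) := by
        rw [hw]
        show u (sref β β) = -(u β)
        rw [rs_sref_self hsref hR0 (hΔR (hBΔ hβB)), map_neg]
      have huβ : ¬ PosComb Δ (u β) := by
        intro hp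
        refine rs_not_pos_both hΔli (fun h0 => hR0 (h0 ▸ huβR)) hp ?_
        rw [← hwβ]
        exact hpos β hβB
      obtain ⟨t', ht'B, hlen', heq⟩ := rs_descent hsref hR0 hRrefl hRred hΔR hΔli hbase
        hBΔ hβB t htB huβ
      have hweq : wprod sref t' = wprod sref (t ++ [β]) := heq.trans hw.symm
      rw [← hweq]
      apply ih t' ?_ ht'B
      · intro α hα; rw [hweq]; exact hpos α hα
      · have : t.length + 1 ≤ n + 1 := by simpa using hlen
        omega


lemma rs_stab (hsref : ∀ α ∈ R, ∀ x : V, sref α x = x - (2 * ⟪x, α⟫ / ⟪α, α⟫) • α)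
    (hR0 : (0:V) ∉ R) (hRrefl : ∀ α ∈ R, ∀ β ∈ R, sref α β ∈ R)
    (hRred : ∀ α ∈ R, ∀ c : ℝ, c • α ∈ R → c = 1 ∨ c = -1)
    (hΔR : Δ ⊆ R) (hΔli : LinearIndependent ℝ ((↑) : ↥(Δ : Set V) → V))
    (hbase : ∀ β ∈ R, PosComb Δ β ∨ PosComb Δ (-β))
    {B : Finset V} (hBΔ : B ⊆ Δ) {y : V} (hy : ∀ α ∈ Δ, 0 ≤ ⟪α, y⟫) :
    ∀ n : ℕ, ∀ l : List V, l.length ≤ n → (∀ a ∈ l, a ∈ B) →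
    (∀ α ∈ Δ, 0 ≤ ⟪α, wprod sref l y⟫) →
    wprod sref l y = y ∧
    wprod sref l ∈ Subgroup.closure (sref '' ((B.filter fun α => ⟪α, y⟫ = 0) : Set V)) := by
  intro n
  induction n with
  | zero =>
    intro l hlen _ _
    rw [List.length_eq_zero_iff.mp (Nat.le_zero.mp hlen)]
    exact ⟨rfl, Subgroup.one_mem _⟩
  | succ n ih =>
    intro l hlen hlB hwy
    by_cases hall : ∀ α ∈ B, PosComb Δ (wprod sref l α)
    · have h1 : wprod sref l = 1 :=
        rs_triv hsref hR0 hRrefl hRred hΔR hΔli hbase hBΔ (n+1) l hlen hlB hall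
      rw [h1]
      exact ⟨rfl, Subgroup.one_mem _⟩
    · push_neg at hall
      obtain ⟨α, hαB, hneg⟩ := hall
      set w := wprod sref l with hwdef
      have hαR : α ∈ R := hΔR (hBΔ hαB)
      have hwαR : w α ∈ R := rs_wprod_R hRrefl (fun a ha => hΔR (hBΔ (hlB a ha))) hαR
      have hposneg : PosComb Δ (-(w α)) := (hbase _ hwαR).resolve_left hneg
      have hαy : ⟪α, y⟫ = 0 := by
        have h1 : 0 ≤ ⟪α, y⟫ := hy α (hBΔ hαB)
        have h2 : ⟪α, y⟫ = ⟪w α, w y⟫ := (w.inner_map_map α y).symm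
        have h3 : 0 ≤ ⟪-(w α), w y⟫ := rs_posComb_inner_nonneg hposneg hwy
        rw [inner_neg_left] at h3
        linarith
      have hfix : sref α y = y :=
        rs_sref_fix hsref hαR (by rw [real_inner_comm]; exact hαy)
      obtain ⟨l', hl'B, hlen', heq⟩ := rs_descent hsref hR0 hRrefl hRred hΔR hΔli hbase
        hBΔ hαB l hlB hneg
      have hl'y : wprod sref l' y = w y := by
        rw [heq]
        show w (sref α y) = w y
        rw [hfix]
      obtain ⟨hfix', hmem'⟩ := ih l' (by omega) hl'B (by rw [hl'y]; exact hwy)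
      have hsq := rs_sref_sq hsref hR0 hαR
      have hwform : w = wprod sref l' * sref α := by
        rw [heq, mul_assoc, hsq, mul_one]
      constructor
      · rw [← hl'y, hfix']
      · rw [hwform]
        refine Subgroup.mul_mem _ hmem' (Subgroup.subset_closure ?_)
        exact ⟨α, by simpa using ⟨hαB, hαy⟩, rfl⟩


end Aux

variable {V : Type*} [NormedAddCommGroup V] [InnerProductSpace ℝ V] [FiniteDimensional ℝ V]

/-- Let `R` be a reduced root system in `V` with base `Δ`, and `θ` a linear
isometry of `V` with `θ(Δ) = Δ` and `θ(R) = R`. Let `A ⊆ B ⊆ Δ` with `θ(B) = B`, let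
`s₀ ∈ W_B` and `s = s₀ ∘ θ`. Then either there is `c > 0` with `‖X − s X‖ ≥ c ‖X‖` for every
`X` in the closed positive chamber intersected with
`𝔞_A^B = {X ∈ span B : ⟪α, X⟫ = 0 ∀ α ∈ A}`, or there is a subset `B₁` with
`A ⊆ B₁ ⊊ B`, `θ(B₁) = B₁` and `s₀ ∈ W_{B₁}`. -/
theorem stmt_17
    (R : Finset V) (hR0 : (0 : V) ∉ R)
    (hRspan : Submodule.span ℝ (R : Set V) = ⊤)
    (sref : V → (V ≃ₗᵢ[ℝ] V))
    (hsref : ∀ α ∈ R, ∀ x : V, sref α x = x - (2 * ⟪x, α⟫ / ⟪α, α⟫) • α)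
    (hRrefl : ∀ α ∈ R, ∀ β ∈ R, sref α β ∈ R)
    (hRint : ∀ α ∈ R, ∀ β ∈ R, ∃ n : ℤ, 2 * ⟪β, α⟫ / ⟪α, α⟫ = (n : ℝ))
    (hRred : ∀ α ∈ R, ∀ c : ℝ, c • α ∈ R → c = 1 ∨ c = -1)
    (Δ : Finset V) (hΔR : Δ ⊆ R)
    (hΔli : LinearIndependent ℝ ((↑) : ↥(Δ : Set V) → V))
    (hΔspan : Submodule.span ℝ (Δ : Set V) = ⊤)
    (hbase : ∀ β ∈ R, PosComb Δ β ∨ PosComb Δ (-β))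
    (θ : V ≃ₗᵢ[ℝ] V) (hθΔ : Finset.image (⇑θ) Δ = Δ) (hθR : Finset.image (⇑θ) R = R)
    (A B : Finset V) (hAB : A ⊆ B) (hBΔ : B ⊆ Δ) (hθB : Finset.image (⇑θ) B = B)
    (s₀ : V ≃ₗᵢ[ℝ] V) (hs₀ : s₀ ∈ Subgroup.closure (sref '' (B : Set V))) :
    (∃ c : ℝ, 0 < c ∧ ∀ X : V,
      (∀ α ∈ Δ, 0 ≤ ⟪α, X⟫) →
      X ∈ Submodule.span ℝ (B : Set V) →
      (∀ α ∈ A, ⟪α, X⟫ = 0) →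
      c * ‖X‖ ≤ ‖X - (s₀ * θ) X‖) ∨
    (∃ B₁ : Finset V, A ⊆ B₁ ∧ B₁ ⊂ B ∧ Finset.image (⇑θ) B₁ = B₁ ∧
      s₀ ∈ Subgroup.closure (sref '' (B₁ : Set V))) := by
  classical
  set s : V ≃ₗᵢ[ℝ] V := s₀ * θ with hs
  set Sset : Set V := {X | ‖X‖ = 1 ∧ (∀ α ∈ Δ, 0 ≤ ⟪α, X⟫) ∧
    X ∈ Submodule.span ℝ (B : Set V) ∧ (∀ α ∈ A, ⟪α, X⟫ = 0)} with hSset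
  by_cases hfix : ∃ X ∈ Sset, s X = X
  · -- second alternative
    right
    obtain ⟨X, ⟨hX1, hX2, hX3, hX4⟩, hsX⟩ := hfix
    have hs₀y : s₀ (θ X) = X := hsX
    have hyΔ : ∀ α ∈ Δ, 0 ≤ ⟪α, θ X⟫ := by
      intro α hα
      rw [← hθΔ] at hα
      obtain ⟨α', hα', rfl⟩ := Finset.mem_image.mp hα
      rw [θ.inner_map_map]
      exact hX2 α' hα'
    obtain ⟨l, hlB, hleq⟩ := rs_exists_word hsref hR0 (fun a ha => hΔR (hBΔ ha)) hs₀
    have hstab := rs_stab hsref hR0 hRrefl hRred hΔR hΔli hbase hBΔ hyΔ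
      l.length l le_rfl hlB (by rw [← hleq, hs₀y]; exact hX2)
    rw [← hleq] at hstab
    obtain ⟨hfixy, hmem⟩ := hstab
    have hθX : θ X = X := hfixy.symm.trans hs₀y
    set B₁ : Finset V := B.filter (fun α => ⟪α, θ X⟫ = 0) with hB₁
    have hXne : X ≠ 0 := fun h => by simp [h] at hX1
    refine ⟨B₁, ?_, ?_, ?_, hmem⟩
    · intro α hα
      refine Finset.mem_filter.mpr ⟨hAB hα, ?_⟩
      rw [hθX]
      exact hX4 α hα
    · refine ⟨Finset.filter_subset _ _, fun hcon => ?_⟩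
      have hall : ∀ α ∈ B, ⟪α, X⟫ = 0 := by
        intro α hα
        have := (Finset.mem_filter.mp (hcon hα)).2
        rwa [hθX] at this
      have hXK : X ∈ LinearMap.ker ((innerSL ℝ X).toLinearMap) := by
        have hle : Submodule.span ℝ (B : Set V) ≤
            LinearMap.ker ((innerSL ℝ X).toLinearMap) := by
          rw [Submodule.span_le]
          intro α hα
          simp only [SetLike.mem_coe, LinearMap.mem_ker, ContinuousLinearMap.coe_coe,
            innerSL_apply_apply]
          rw [real_inner_comm]
          exact hall α hα
        exact hle hX3
      simp only [LinearMap.mem_ker, ContinuousLinearMap.coe_coe, innerSL_apply_apply] at hXK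
      exact hXne (inner_self_eq_zero.mp hXK)
    · apply Finset.eq_of_subset_of_card_le
      · intro a ha
        obtain ⟨α, hα, rfl⟩ := Finset.mem_image.mp ha
        obtain ⟨hαB, hαy⟩ := Finset.mem_filter.mp hα
        refine Finset.mem_filter.mpr ⟨?_, ?_⟩
        · rw [← hθB]; exact Finset.mem_image_of_mem _ hαB
        · rw [θ.inner_map_map]
          rwa [hθX] at hαy
      · exact le_of_eq (Finset.card_image_of_injective _ θ.injective).symm
  · -- first alternative: compactness
    left
    push_neg at hfix
    have hclosed : IsClosed Sset := by
      have h1 : IsClosed {X : V | ‖X‖ = 1} := isClosed_eq continuous_norm continuous_const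
      have h2 : IsClosed {X : V | ∀ α ∈ Δ, 0 ≤ ⟪α, X⟫} := by
        have : {X : V | ∀ α ∈ Δ, 0 ≤ ⟪α, X⟫} = ⋂ α ∈ Δ, {X : V | 0 ≤ ⟪α, X⟫} := by
          ext x; simp
        rw [this]
        exact isClosed_biInter fun α _ =>
          isClosed_le continuous_const (innerSL ℝ α).continuous
      have h3 : IsClosed ((Submodule.span ℝ (B : Set V) : Submodule ℝ V) : Set V) :=
        Submodule.closed_of_finiteDimensional _
      have h4 : IsClosed {X : V | ∀ α ∈ A, ⟪α, X⟫ = 0} := by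
        have : {X : V | ∀ α ∈ A, ⟪α, X⟫ = 0} = ⋂ α ∈ A, {X : V | ⟪α, X⟫ = 0} := by
          ext x; simp
        rw [this]
        exact isClosed_biInter fun α _ =>
          isClosed_eq (innerSL ℝ α).continuous continuous_const
      exact h1.inter (h2.inter (h3.inter h4))
    have hbdd : Bornology.IsBounded Sset := by
      apply (Metric.isBounded_closedBall (x := (0:V)) (r := 1)).subset
      intro x hx
      simp only [Metric.mem_closedBall, dist_zero_right]
      exact le_of_eq hx.1
    have hcompact : IsCompact Sset := Metric.isCompact_of_isClosed_isBounded hclosed hbdd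
    have hcont : Continuous (fun X : V => ‖X - s X‖) :=
      (continuous_id.sub s.continuous).norm
    have hmemS : ∀ X : V, ‖X‖ = 1 → (∀ α ∈ Δ, 0 ≤ ⟪α, X⟫) →
        X ∈ Submodule.span ℝ (B : Set V) → (∀ α ∈ A, ⟪α, X⟫ = 0) → X ∈ Sset :=
      fun X h1 h2 h3 h4 => ⟨h1, h2, h3, h4⟩
    rcases Sset.eq_empty_or_nonempty with hemp | hne
    · refine ⟨1, one_pos, fun X hX2 hX3 hX4 => ?_⟩
      by_cases hX0 : X = 0
      · simp [hX0]
      · exfalso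
        have hn : ‖X‖ ≠ 0 := norm_ne_zero_iff.mpr hX0
        have hu : (‖X‖⁻¹ • X) ∈ Sset := by
          refine hmemS _ ?_ ?_ ?_ ?_
          · rw [norm_smul, norm_inv, norm_norm, inv_mul_cancel₀ hn]
          · intro α hα
            rw [real_inner_smul_right]
            exact mul_nonneg (by positivity) (hX2 α hα)
          · exact Submodule.smul_mem _ _ hX3
          · intro α hα
            rw [real_inner_smul_right, hX4 α hα, mul_zero]
        rw [hemp] at hu
        exact hu
    · obtain ⟨x₀, hx₀S, hx₀min⟩ := hcompact.exists_isMinOn hne hcont.continuousOn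
      have hcpos : 0 < ‖x₀ - s x₀‖ := by
        rw [norm_sub_pos_iff]
        intro h
        exact hfix x₀ hx₀S (by rw [← h])
      refine ⟨‖x₀ - s x₀‖, hcpos, fun X hX2 hX3 hX4 => ?_⟩
      by_cases hX0 : X = 0
      · simp [hX0]
      · have hn : ‖X‖ ≠ 0 := norm_ne_zero_iff.mpr hX0
        set u : V := ‖X‖⁻¹ • X with hudef
        have hu : u ∈ Sset := by
          refine hmemS _ ?_ ?_ ?_ ?_
          · rw [hudef, norm_smul, norm_inv, norm_norm, inv_mul_cancel₀ hn]
          · intro α hα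
            rw [hudef, real_inner_smul_right]
            exact mul_nonneg (by positivity) (hX2 α hα)
          · exact Submodule.smul_mem _ _ hX3
          · intro α hα
            rw [hudef, real_inner_smul_right, hX4 α hα, mul_zero]
        have hXu : X = ‖X‖ • u := by
          rw [hudef, smul_smul, mul_inv_cancel₀ hn, one_smul]
        have hscale : ‖X - s X‖ = ‖X‖ * ‖u - s u‖ := by
          conv_lhs => rw [hXu]
          rw [map_smul, ← smul_sub, norm_smul, norm_norm]
        rw [hscale, mul_comm]
        have h5 : ‖x₀ - s x₀‖ ≤ ‖u - s u‖ := hx₀min hu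
        have h6 : 0 ≤ ‖X‖ := norm_nonneg X
        nlinarith
end
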